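/- Suppose Y and C are independent with atomless laws. Then for every y ∈ ℝ with ℙ(Q > y) > 0, the survival function of the latent outcome Y is identified from the joint distribution of the observables (Q, δ): ℙ(Y > y) = exp(−∫_{(-∞,y]} (ℙ(Q ≥ s))⁻¹ dν₁(s)). (This is the full identification content of Proposition 1 in the continuous case: exponentiating the observable cumulative hazard recovers the distribution of Y.) -/

import Mathlib

open MeasureTheory ProbabilityTheory Set Filter Topology
open scoped ENNReal

lemma km_level_set (μ : Measure ℝ) [IsProbabilityMeasure μ]
    (hatom : ∀ a : ℝ, μ {a} = 0) {c : ℝ} (hc0 : 0 < c) (hc1 : c < 1) :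
    ∃ x₀ : ℝ, Ioi x₀ ⊆ {s | (μ (Ici s)).toReal ≤ c} ∧
      {s | (μ (Ici s)).toReal ≤ c} ⊆ Ici x₀ ∧
      μ (Ici x₀) = ENNReal.ofReal c ∧ μ (Ioi x₀) = ENNReal.ofReal c := by
  set St : ℝ → ℝ := fun s => (μ (Ici s)).toReal with hSt
  have hfin : ∀ s, μ (Ici s) ≠ ∞ := fun s => measure_ne_top μ _
  have hS_anti : Antitone fun s => μ (Ici s) := fun a b hab =>
    measure_mono (Ici_subset_Ici.2 hab)
  have hSt_anti : Antitone St := fun a b hab =>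
    ENNReal.toReal_le_toReal (hfin _) (hfin _) |>.mpr (hS_anti hab)
  set E : Set ℝ := {s | St s ≤ c} with hE
  have hup : ∀ a ∈ E, ∀ b, a ≤ b → b ∈ E := fun a ha b hab =>
    le_trans (hSt_anti hab) ha
  -- E nonempty
  have htop : Tendsto (fun n : ℕ => μ (Ici (n : ℝ))) atTop (𝓝 0) := by
    have h := tendsto_measure_iInter_atTop (μ := μ) (s := fun n : ℕ => Ici (n : ℝ))
      (fun n => (measurableSet_Ici).nullMeasurableSet)
      (fun a b hab => Ici_subset_Ici.2 (by exact_mod_cast hab)) ⟨0, measure_ne_top μ _⟩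
    have : ⋂ n : ℕ, Ici ((n : ℝ)) = ∅ := by
      ext x; simp only [mem_iInter, mem_Ici, mem_empty_iff_false, iff_false, not_forall, not_le]
      obtain ⟨n, hn⟩ := exists_nat_gt x
      exact ⟨n, hn⟩
    rwa [this, measure_empty] at h
  have hEne : E.Nonempty := by
    have := htop.eventually_lt_const (by positivity : (0:ℝ≥0∞) < ENNReal.ofReal c)
    obtain ⟨n, hn⟩ := this.exists
    exact ⟨n, by
      have := (ENNReal.lt_ofReal_iff_toReal_lt (hfin _)).1 hn
      exact this.le⟩
  -- E bddBelow
  have hbot : Tendsto (fun n : ℕ => μ (Ici (-(n : ℝ)))) atTop (𝓝 1) := by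
    have h := tendsto_measure_iUnion_atTop (μ := μ) (s := fun n : ℕ => Ici (-(n : ℝ)))
      (fun a b hab => Ici_subset_Ici.2 (by exact_mod_cast neg_le_neg (by exact_mod_cast hab)))
    have : ⋃ n : ℕ, Ici (-(n : ℝ)) = univ := by
      ext x; simp only [mem_iUnion, mem_Ici, mem_univ, iff_true]
      obtain ⟨n, hn⟩ := exists_nat_gt (-x)
      exact ⟨n, by linarith⟩
    rw [this, measure_univ] at h
    exact h
  have hEbdd : BddBelow E := by
    have := hbot.eventually_const_lt (by
      calc ENNReal.ofReal c < ENNReal.ofReal 1 := by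
            exact (ENNReal.ofReal_lt_ofReal_iff one_pos).2 hc1
        _ = 1 := ENNReal.ofReal_one)
    obtain ⟨n, hn⟩ := this.exists
    refine ⟨-(n:ℝ), fun x hx => ?_⟩
    by_contra hlt
    push_neg at hlt
    have h1 : St (-(n:ℝ)) ≤ c := le_trans (hSt_anti hlt.le) hx
    have h2 : c < St (-(n:ℝ)) := by
      have := (ENNReal.ofReal_lt_iff_lt_toReal hc0.le (hfin _)).1 hn
      exact this
    linarith
  set x₀ := sInf E with hx0
  have hIoi : Ioi x₀ ⊆ E := by
    intro s hs
    obtain ⟨a, haE, has⟩ := (csInf_lt_iff hEbdd hEne).1 hs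
    exact hup a haE s has.le
  have hIci : E ⊆ Ici x₀ := fun x hx => csInf_le hEbdd hx
  -- μ (Ici x₀) ≥ ofReal c
  have hgec : ENNReal.ofReal c ≤ μ (Ici x₀) := by
    have hseq : Tendsto (fun n : ℕ => μ (Ici (x₀ - 1/(n+1)))) atTop (𝓝 (μ (Ici x₀))) := by
      have h := tendsto_measure_iInter_atTop (μ := μ)
        (s := fun n : ℕ => Ici (x₀ - 1/((n:ℝ)+1)))
        (fun n => measurableSet_Ici.nullMeasurableSet)
        (fun a b hab => Ici_subset_Ici.2 (by
          have : 1/((b:ℝ)+1) ≤ 1/((a:ℝ)+1) := by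
            apply one_div_le_one_div_of_le (by positivity)
            linarith [(Nat.cast_le (α := ℝ)).2 hab]
          linarith)) ⟨0, hfin _⟩
      have : ⋂ n : ℕ, Ici (x₀ - 1/((n:ℝ)+1)) = Ici x₀ := by
        ext x
        simp only [mem_iInter, mem_Ici]
        constructor
        · intro h
          by_contra hlt
          push_neg at hlt
          obtain ⟨n, hn⟩ := exists_nat_one_div_lt (by linarith : 0 < x₀ - x)
          have := h n
          linarith
        · intro h n
          have hp : (0:ℝ) < 1/((n:ℝ)+1) := by positivity
          linarith
      rwa [this] at h
    refine ge_of_tendsto hseq (Eventually.of_forall fun n => ?_)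
    have hnot : x₀ - 1/((n:ℝ)+1) ∉ E := by
      intro hmem
      have := csInf_le hEbdd hmem
      have hpos : 0 < 1/((n:ℝ)+1) := by positivity
      rw [← hx0] at this; linarith
    have : c < St (x₀ - 1/((n:ℝ)+1)) := not_le.mp hnot
    exact le_of_lt ((ENNReal.ofReal_lt_iff_lt_toReal hc0.le (hfin _)).2 this)
  -- μ (Ioi x₀) ≤ ofReal c
  have hlec : μ (Ioi x₀) ≤ ENNReal.ofReal c := by
    have hseq : Tendsto (fun n : ℕ => μ (Ici (x₀ + 1/(n+1)))) atTop (𝓝 (μ (Ioi x₀))) := by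
      have h := tendsto_measure_iUnion_atTop (μ := μ)
        (s := fun n : ℕ => Ici (x₀ + 1/((n:ℝ)+1)))
        (fun a b hab => Ici_subset_Ici.2 (by
          have : 1/((b:ℝ)+1) ≤ 1/((a:ℝ)+1) := by
            apply one_div_le_one_div_of_le (by positivity)
            linarith [(Nat.cast_le (α := ℝ)).2 hab]
          linarith))
      have : ⋃ n : ℕ, Ici (x₀ + 1/((n:ℝ)+1)) = Ioi x₀ := by
        ext x
        simp only [mem_iUnion, mem_Ici, mem_Ioi]
        constructor
        · rintro ⟨n, hn⟩
          have hp : (0:ℝ) < 1/((n:ℝ)+1) := by positivity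
          linarith
        · intro h
          obtain ⟨n, hn⟩ := exists_nat_one_div_lt (by linarith : 0 < x - x₀)
          exact ⟨n, by linarith⟩
      rwa [this] at h
    refine le_of_tendsto hseq (Eventually.of_forall fun n => ?_)
    have hmem : x₀ + 1/((n:ℝ)+1) ∈ E := hIoi (by
      simp only [mem_Ioi]
      have hp : (0:ℝ) < 1/((n:ℝ)+1) := by positivity
      linarith)
    calc μ (Ici (x₀ + 1/((n:ℝ)+1))) = ENNReal.ofReal (St (x₀ + 1/((n:ℝ)+1))) :=
          (ENNReal.ofReal_toReal (hfin _)).symm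
      _ ≤ ENNReal.ofReal c := ENNReal.ofReal_le_ofReal hmem
  have hIciIoi : μ (Ici x₀) = μ (Ioi x₀) := by
    have : Ici x₀ = {x₀} ∪ Ioi x₀ := by
      ext x; simp only [mem_Ici, mem_union, mem_singleton_iff, mem_Ioi]
      constructor
      · intro h; rcases eq_or_lt_of_le h with h | h
        · exact Or.inl h.symm
        · exact Or.inr h
      · rintro (h | h) <;> simp [h, le_of_lt]
    rw [this, measure_union (by simp) measurableSet_Ioi, hatom, zero_add]
  have h1 : μ (Ici x₀) = ENNReal.ofReal c := le_antisymm (hIciIoi ▸ hlec) hgec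
  exact ⟨x₀, hIoi, hIci, h1, hIciIoi ▸ h1⟩

lemma km_cumhazard (μ : Measure ℝ) [IsProbabilityMeasure μ]
    (hatom : ∀ a : ℝ, μ {a} = 0) (y : ℝ) (hy : μ (Ici y) ≠ 0) :
    ∫⁻ s in Iic y, (μ (Ici s))⁻¹ ∂μ
      = ENNReal.ofReal (- Real.log (μ (Ici y)).toReal) := by
  set St : ℝ → ℝ := fun s => (μ (Ici s)).toReal with hSt
  have hfin : ∀ s, μ (Ici s) ≠ ∞ := fun s => measure_ne_top μ _
  have hS_anti : Antitone fun s => μ (Ici s) := fun a b hab =>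
    measure_mono (Ici_subset_Ici.2 hab)
  have hSt_anti : Antitone St := fun a b hab =>
    (ENNReal.toReal_le_toReal (hfin _) (hfin _)).mpr (hS_anti hab)
  set σ : ℝ := St y with hσdef
  have hσ0 : 0 < σ := ENNReal.toReal_pos hy (hfin y)
  have hσ1 : σ ≤ 1 := by
    have := prob_le_one (μ := μ) (s := Ici y)
    simpa [hσdef, hSt] using ENNReal.toReal_le_of_le_ofReal zero_le_one (by simpa using this)
  have hStpos : ∀ s ≤ y, 0 < St s := fun s hs =>
    lt_of_lt_of_le hσ0 (hSt_anti hs)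
  have hSt1 : ∀ s, St s ≤ 1 := fun s => by
    have := prob_le_one (μ := μ) (s := Ici s)
    exact ENNReal.toReal_le_of_le_ofReal zero_le_one (by simpa using this)
  have hIciσ : μ (Ici y) = ENNReal.ofReal σ := (ENNReal.ofReal_toReal (hfin y)).symm
  have hIoiσ : μ (Ioi y) = ENNReal.ofReal σ := by
    have hsplit : Ici y = {y} ∪ Ioi y := by
      ext x; simp only [mem_Ici, mem_union, mem_singleton_iff, mem_Ioi]
      constructor
      · intro h; rcases eq_or_lt_of_le h with h | h
        · exact Or.inl h.symm
        · exact Or.inr h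
      · rintro (h | h) <;> simp [h, le_of_lt]
    rw [← hIciσ, hsplit, measure_union (by simp) measurableSet_Ioi, hatom, zero_add]
  -- Step 1: rewrite integrand
  have step1 : ∫⁻ s in Iic y, (μ (Ici s))⁻¹ ∂μ
      = ∫⁻ s in Iic y, ENNReal.ofReal ((St s)⁻¹) ∂μ := by
    refine setLIntegral_congr_fun measurableSet_Iic (fun s hs => ?_)
    rw [ENNReal.ofReal_inv_of_pos (hStpos s hs), ENNReal.ofReal_toReal (hfin s)]
  rw [step1]
  -- Step 2: layercake
  have hmble : Measurable fun s => (St s)⁻¹ :=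
    (ENNReal.measurable_toReal.comp hS_anti.measurable).inv
  have step2 := lintegral_eq_lintegral_meas_le (μ.restrict (Iic y))
    (f := fun s => (St s)⁻¹)
    (Eventually.of_forall fun s => inv_nonneg.2 ENNReal.toReal_nonneg)
    hmble.aemeasurable
  rw [step2]
  -- Step 3: compute the t-integral
  have hσinv1 : (1:ℝ) ≤ σ⁻¹ := (one_le_inv₀ hσ0).2 hσ1
  have hsplitIoi : Ioi (0:ℝ) = (Ioc 0 1 ∪ Ioc 1 σ⁻¹) ∪ Ioi σ⁻¹ := by
    ext t
    simp only [mem_Ioi, mem_union, mem_Ioc]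
    constructor
    · intro h
      rcases le_or_gt t 1 with h1 | h1
      · exact Or.inl (Or.inl ⟨h, h1⟩)
      · rcases le_or_gt t σ⁻¹ with h2 | h2
        · exact Or.inl (Or.inr ⟨h1, h2⟩)
        · exact Or.inr h2
    · rintro ((⟨h, _⟩ | ⟨h, _⟩) | h) <;> linarith
  rw [hsplitIoi, lintegral_union measurableSet_Ioi (by
        rw [Set.disjoint_union_left]
        constructor
        · exact Set.disjoint_left.2 fun t ht ht' => by
            simp only [mem_Ioc, mem_Ioi] at ht ht'; linarith [ht.2, ht']
        · exact Set.disjoint_left.2 fun t ht ht' => by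
            simp only [mem_Ioc, mem_Ioi] at ht ht'; linarith [ht.2, ht']),
      lintegral_union measurableSet_Ioc (Set.disjoint_left.2 fun t ht ht' => by
        simp only [mem_Ioc] at ht ht'; linarith [ht.2, ht'.1])]
  -- membership helper
  have hmem : ∀ t : ℝ, 0 < t →
      {a : ℝ | t ≤ (St a)⁻¹} ∩ Iic y = {a : ℝ | St a ≤ t⁻¹} ∩ Iic y := by
    intro t ht
    ext a
    simp only [mem_inter_iff, mem_setOf_eq, mem_Iic]
    constructor
    · rintro ⟨h1, h2⟩
      refine ⟨?_, h2⟩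
      have hp := hStpos a h2
      rw [← inv_inv (St a)]
      exact inv_anti₀ ht h1
    · rintro ⟨h1, h2⟩
      refine ⟨?_, h2⟩
      have hp := hStpos a h2
      rw [← inv_inv t]
      exact inv_anti₀ hp h1
  have hrest : ∀ t : ℝ, (μ.restrict (Iic y)) {a : ℝ | t ≤ (St a)⁻¹}
      = μ ({a : ℝ | t ≤ (St a)⁻¹} ∩ Iic y) := fun t =>
    Measure.restrict_apply' measurableSet_Iic
  -- Piece 1
  have piece1 : ∫⁻ t in Ioc (0:ℝ) 1, (μ.restrict (Iic y)) {a : ℝ | t ≤ (St a)⁻¹}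
      = ENNReal.ofReal (1 - σ) := by
    have hIicμ : μ (Iic y) = ENNReal.ofReal (1 - σ) := by
      have hc : Iic y = (Ioi y)ᶜ := by simp
      rw [hc, measure_compl measurableSet_Ioi (measure_ne_top μ _), hIoiσ, measure_univ]
      rw [ENNReal.ofReal_sub _ hσ0.le, ENNReal.ofReal_one]
    have hval : ∀ t ∈ Ioc (0:ℝ) 1,
        (μ.restrict (Iic y)) {a : ℝ | t ≤ (St a)⁻¹} = ENNReal.ofReal (1 - σ) := by
      intro t ht
      rw [hrest t]
      have heq : {a : ℝ | t ≤ (St a)⁻¹} ∩ Iic y = Iic y := by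
        apply inter_eq_right.2
        intro a ha
        simp only [mem_setOf_eq]
        have hp := hStpos a ha
        calc t ≤ 1 := ht.2
          _ ≤ (St a)⁻¹ := (one_le_inv₀ hp).2 (hSt1 a)
      rw [heq, hIicμ]
    rw [setLIntegral_congr_fun measurableSet_Ioc hval,
      setLIntegral_const, Real.volume_Ioc]
    norm_num
  -- Piece 2
  have piece2 : ∫⁻ t in Ioc (1:ℝ) σ⁻¹, (μ.restrict (Iic y)) {a : ℝ | t ≤ (St a)⁻¹}
      = ENNReal.ofReal (- Real.log σ - (1 - σ)) := by
    have hptwise : ∀ t ∈ Ioc (1:ℝ) σ⁻¹,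
        (μ.restrict (Iic y)) {a : ℝ | t ≤ (St a)⁻¹} = ENNReal.ofReal (t⁻¹ - σ) := by
      intro t ht
      obtain ⟨ht1, ht2⟩ := ht
      have ht0 : (0:ℝ) < t := by linarith
      have hcσ : σ ≤ t⁻¹ := by
        rw [← inv_inv σ]
        exact inv_anti₀ (by positivity) ht2
      have hc1 : t⁻¹ < 1 := by
        have := inv_lt_one_of_one_lt₀ ht1
        simpa using this
      have hc0 : (0:ℝ) < t⁻¹ := by positivity
      obtain ⟨x₀, hIoix, hIcix, hmuIci, hmuIoi⟩ := km_level_set μ hatom hc0 hc1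
      set E := {s : ℝ | St s ≤ t⁻¹} with hEdef
      have hmuE : μ E = ENNReal.ofReal t⁻¹ := by
        refine le_antisymm ?_ ?_
        · calc μ E ≤ μ (Ici x₀) := measure_mono hIcix
            _ = ENNReal.ofReal t⁻¹ := hmuIci
        · calc ENNReal.ofReal t⁻¹ = μ (Ioi x₀) := hmuIoi.symm
            _ ≤ μ E := measure_mono hIoix
      have hIoiyE : Ioi y ⊆ E := fun a ha =>
        le_trans (hSt_anti (le_of_lt ha)) hcσ
      have hEdecomp : E = (E ∩ Iic y) ∪ Ioi y := by
        ext x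
        simp only [mem_union, mem_inter_iff, mem_Iic, mem_Ioi]
        constructor
        · intro h
          rcases le_or_gt x y with h' | h'
          · exact Or.inl ⟨h, h'⟩
          · exact Or.inr h'
        · rintro (⟨h, _⟩ | h)
          · exact h
          · exact hIoiyE h
      have hadd : μ (E ∩ Iic y) + ENNReal.ofReal σ = ENNReal.ofReal t⁻¹ := by
        rw [← hIoiσ, ← measure_union (Set.disjoint_left.2 fun a ha ha' => by
          simp only [mem_inter_iff, mem_Iic] at ha
          simp only [mem_Ioi] at ha'
          linarith [ha.2]) measurableSet_Ioi, ← hEdecomp, hmuE]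
      rw [hrest t, hmem t ht0, ← hEdef]
      have : ENNReal.ofReal (t⁻¹ - σ) + ENNReal.ofReal σ = ENNReal.ofReal t⁻¹ := by
        rw [← ENNReal.ofReal_add (by linarith) hσ0.le]
        ring_nf
      have hcateq := hadd.trans this.symm
      exact (ENNReal.add_left_inj ENNReal.ofReal_ne_top).1 hcateq
    rw [setLIntegral_congr_fun measurableSet_Ioc hptwise]
    have hinteg : IntegrableOn (fun t : ℝ => t⁻¹ - σ) (Ioc 1 σ⁻¹) := by
      apply IntegrableOn.mono_set _ Ioc_subset_Icc_self
      apply ContinuousOn.integrableOn_Icc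
      apply ContinuousOn.sub _ continuousOn_const
      apply ContinuousOn.inv₀ continuousOn_id
      intro x hx
      simp only [mem_Icc] at hx
      intro h
      simp only [id_eq] at h
      rw [h] at hx; linarith [hx.1]
    have hnn : 0 ≤ᵐ[volume.restrict (Ioc (1:ℝ) σ⁻¹)] fun t : ℝ => t⁻¹ - σ := by
      refine (ae_restrict_iff' measurableSet_Ioc).2 (Eventually.of_forall fun t ht => ?_)
      obtain ⟨ht1, ht2⟩ := ht
      have : σ ≤ t⁻¹ := by
        rw [← inv_inv σ]
        exact inv_anti₀ (by positivity) ht2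
      simp only [Pi.zero_apply]
      linarith
    rw [← ofReal_integral_eq_lintegral_ofReal hinteg hnn]
    congr 1
    rw [← intervalIntegral.integral_of_le hσinv1]
    have h0 : (0:ℝ) ∉ uIcc 1 σ⁻¹ := by
      rw [uIcc_of_le hσinv1]
      simp only [mem_Icc]
      intro h; linarith [h.1]
    rw [intervalIntegral.integral_sub (intervalIntegral.intervalIntegrable_inv
        (fun x hx hx0 => h0 (hx0 ▸ hx)) continuous_id.continuousOn)
        intervalIntegrable_const,
      integral_inv h0, intervalIntegral.integral_const, div_one, Real.log_inv, smul_eq_mul]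
    have hσσ : (σ⁻¹ - 1) * σ = 1 - σ := by field_simp
    rw [hσσ]
  -- Piece 3
  have piece3 : ∫⁻ t in Ioi σ⁻¹, (μ.restrict (Iic y)) {a : ℝ | t ≤ (St a)⁻¹} = 0 := by
    have hval : ∀ t ∈ Ioi σ⁻¹,
        (μ.restrict (Iic y)) {a : ℝ | t ≤ (St a)⁻¹} = 0 := by
      intro t ht
      simp only [mem_Ioi] at ht
      rw [hrest t]
      have heq : {a : ℝ | t ≤ (St a)⁻¹} ∩ Iic y = ∅ := by
        ext a
        simp only [mem_inter_iff, mem_setOf_eq, mem_Iic, mem_empty_iff_false, iff_false,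
          not_and]
        intro h1 h2
        have hp := hStpos a h2
        have hle : (St a)⁻¹ ≤ σ⁻¹ := inv_anti₀ hσ0 (hSt_anti h2)
        linarith
      rw [heq, measure_empty]
    rw [setLIntegral_congr_fun measurableSet_Ioi hval, lintegral_zero]
  rw [piece1, piece2, piece3, add_zero]
  have hlog : Real.log σ ≤ σ - 1 := Real.log_le_sub_one_of_pos hσ0
  rw [← ENNReal.ofReal_add (by linarith) (by linarith)]
  congr 1
  ring

lemma km_nu1_lintegral {Ω : Type*} [MeasurableSpace Ω] (P : Measure Ω) [IsProbabilityMeasure P]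
    (Y C : Ω → ℝ) (hY : Measurable Y) (hC : Measurable C)
    (hindep : IndepFun Y C P) (f : ℝ → ℝ≥0∞) (hf : Measurable f) (y : ℝ) :
    ∫⁻ s in Iic y, f s
        ∂(Measure.map (fun ω => min (Y ω) (C ω)) (P.restrict {ω | Y ω ≤ C ω}))
      = ∫⁻ s in Iic y, f s * (P.map C) (Ici s) ∂(P.map Y) := by
  have hQ : Measurable fun ω => min (Y ω) (C ω) := hY.min hC
  have hT : MeasurableSet {ω | Y ω ≤ C ω} := measurableSet_le hY hC
  rw [Measure.restrict_map hQ measurableSet_Iic, lintegral_map hf hQ,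
    Measure.restrict_restrict (hQ measurableSet_Iic)]
  have hseteq : (fun ω => min (Y ω) (C ω)) ⁻¹' Iic y ∩ {ω | Y ω ≤ C ω}
      = {ω | Y ω ≤ y ∧ Y ω ≤ C ω} := by
    ext ω
    simp only [mem_inter_iff, mem_preimage, mem_Iic, mem_setOf_eq]
    constructor
    · rintro ⟨h1, h2⟩
      exact ⟨by rwa [min_eq_left h2] at h1, h2⟩
    · rintro ⟨h1, h2⟩
      exact ⟨by rwa [min_eq_left h2], h2⟩
  rw [hseteq]
  have hD : MeasurableSet {ω | Y ω ≤ y ∧ Y ω ≤ C ω} :=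
    (hY measurableSet_Iic).inter hT
  have hcong : ∫⁻ ω in {ω | Y ω ≤ y ∧ Y ω ≤ C ω}, f (min (Y ω) (C ω)) ∂P
      = ∫⁻ ω in {ω | Y ω ≤ y ∧ Y ω ≤ C ω}, f (Y ω) ∂P := by
    refine setLIntegral_congr_fun hD (fun ω hω => ?_)
    rw [min_eq_left hω.2]
  rw [hcong]
  -- move to the joint law
  set g : ℝ × ℝ → ℝ≥0∞ :=
    fun p => Set.indicator {p : ℝ × ℝ | p.1 ≤ y ∧ p.1 ≤ p.2} (fun p => f p.1) p with hg
  have hgmble : Measurable g := by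
    apply Measurable.indicator (hf.comp measurable_fst)
    exact (measurable_fst measurableSet_Iic).inter (measurableSet_le measurable_fst measurable_snd)
  have hind : ∫⁻ ω in {ω | Y ω ≤ y ∧ Y ω ≤ C ω}, f (Y ω) ∂P
      = ∫⁻ ω, g (Y ω, C ω) ∂P := by
    rw [← lintegral_indicator hD]
    refine lintegral_congr fun ω => ?_
    by_cases h : Y ω ≤ y ∧ Y ω ≤ C ω
    · rw [Set.indicator_of_mem (show ω ∈ {ω | Y ω ≤ y ∧ Y ω ≤ C ω} from h),
        show g (Y ω, C ω) = f (Y ω) from Set.indicator_of_mem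
          (show (Y ω, C ω) ∈ {p : ℝ × ℝ | p.1 ≤ y ∧ p.1 ≤ p.2} from h) _]
    · rw [Set.indicator_of_notMem (show ω ∉ {ω | Y ω ≤ y ∧ Y ω ≤ C ω} from h),
        show g (Y ω, C ω) = 0 from Set.indicator_of_notMem
          (show (Y ω, C ω) ∉ {p : ℝ × ℝ | p.1 ≤ y ∧ p.1 ≤ p.2} from h) _]
  rw [hind, ← lintegral_map hgmble (hY.prodMk hC),
    (indepFun_iff_map_prod_eq_prod_map_map hY.aemeasurable hC.aemeasurable).1 hindep,
    lintegral_prod _ hgmble.aemeasurable]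
  rw [← lintegral_indicator measurableSet_Iic]
  congr 1
  ext a
  by_cases ha : a ≤ y
  · have : ∀ b : ℝ, g (a, b) = Set.indicator (Ici a) (fun _ => f a) b := by
      intro b
      by_cases hb : a ≤ b
      · rw [show g (a, b) = f a from Set.indicator_of_mem
            (show (a, b) ∈ {p : ℝ × ℝ | p.1 ≤ y ∧ p.1 ≤ p.2} from ⟨ha, hb⟩) _,
          Set.indicator_of_mem (show b ∈ Ici a from hb)]
      · rw [show g (a, b) = 0 from Set.indicator_of_notMem
            (show (a, b) ∉ {p : ℝ × ℝ | p.1 ≤ y ∧ p.1 ≤ p.2} from fun hmem => hb hmem.2) _,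
          Set.indicator_of_notMem (show b ∉ Ici a from hb)]
    simp only [this]
    rw [lintegral_indicator measurableSet_Ici, setLIntegral_const,
      Set.indicator_of_mem (by exact ha)]
  · have : ∀ b : ℝ, g (a, b) = 0 := fun b =>
      Set.indicator_of_notMem
        (show (a, b) ∉ {p : ℝ × ℝ | p.1 ≤ y ∧ p.1 ≤ p.2} from fun hmem => ha hmem.1) _
    simp only [this]
    rw [lintegral_zero, Set.indicator_of_notMem (by exact ha)]

lemma km_Ici_eq_Ioi (μ : Measure ℝ) (hatom : μ {(a : ℝ)} = 0) :
    μ (Ici a) = μ (Ioi a) := by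
  have hsplit : Ici a = {a} ∪ Ioi a := by
    ext x; simp only [mem_Ici, mem_union, mem_singleton_iff, mem_Ioi]
    constructor
    · intro h; rcases eq_or_lt_of_le h with h | h
      · exact Or.inl h.symm
      · exact Or.inr h
    · rintro (h | h) <;> simp [h, le_of_lt]
  rw [hsplit, measure_union (by simp) measurableSet_Ioi, hatom, zero_add]

/-- Suppose the latent outcome `Y` and the censoring variable `C` are
independent with atomless laws. Then for every `y` with `P(Q > y) > 0` (where
`Q = min(Y, C)`), the survival function of the latent outcome is identified from the joint
distribution of the observables:
`P(Y > y) = exp(−∫_{(-∞,y]} (P(Q ≥ s))⁻¹ dν₁(s))`, where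
`ν₁(A) = P(Q ∈ A, Y ≤ C)` is the uncensored sub-distribution measure — exponentiating the
observable cumulative hazard recovers the distribution of `Y`. -/
theorem kaplan_meier_identification_continuous
    {Ω : Type*} [MeasurableSpace Ω] (P : Measure Ω) [IsProbabilityMeasure P]
    (Y C : Ω → ℝ) (hY : Measurable Y) (hC : Measurable C)
    (hindep : IndepFun Y C P)
    (hYatomless : ∀ a : ℝ, P {ω | Y ω = a} = 0)
    (hCatomless : ∀ c : ℝ, P {ω | C ω = c} = 0)
    (y : ℝ) (hy : 0 < P {ω | y < min (Y ω) (C ω)}) :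
    P {ω | y < Y ω}
      = ENNReal.ofReal (Real.exp
          (-(∫⁻ s in Iic y, (P {ω | s ≤ min (Y ω) (C ω)})⁻¹
              ∂(Measure.map (fun ω => min (Y ω) (C ω))
                  (P.restrict {ω | Y ω ≤ C ω}))).toReal)) := by
  have hμYprob : IsProbabilityMeasure (P.map Y) := Measure.isProbabilityMeasure_map hY.aemeasurable
  have hμCprob : IsProbabilityMeasure (P.map C) := Measure.isProbabilityMeasure_map hC.aemeasurable
  have hatomY : ∀ a : ℝ, (P.map Y) {a} = 0 := by
    intro a
    rw [Measure.map_apply hY (measurableSet_singleton a)]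
    have : Y ⁻¹' {a} = {ω | Y ω = a} := by ext ω; simp
    rw [this]; exact hYatomless a
  -- product formulas
  have h1 : ∀ s : ℝ, P {ω | s ≤ min (Y ω) (C ω)}
      = (P.map Y) (Ici s) * (P.map C) (Ici s) := by
    intro s
    have hset : {ω | s ≤ min (Y ω) (C ω)} = Y ⁻¹' Ici s ∩ C ⁻¹' Ici s := by
      ext ω; simp [le_min_iff]
    rw [hset, hindep.measure_inter_preimage_eq_mul _ _ measurableSet_Ici measurableSet_Ici,
      ← Measure.map_apply hY measurableSet_Ici, ← Measure.map_apply hC measurableSet_Ici]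
  have h1' : P {ω | y < min (Y ω) (C ω)} = (P.map Y) (Ioi y) * (P.map C) (Ioi y) := by
    have hset : {ω | y < min (Y ω) (C ω)} = Y ⁻¹' Ioi y ∩ C ⁻¹' Ioi y := by
      ext ω; simp [lt_min_iff]
    rw [hset, hindep.measure_inter_preimage_eq_mul _ _ measurableSet_Ioi measurableSet_Ioi,
      ← Measure.map_apply hY measurableSet_Ioi, ← Measure.map_apply hC measurableSet_Ioi]
  rw [h1'] at hy
  have hYpos : (P.map Y) (Ioi y) ≠ 0 := by
    intro h; rw [h, zero_mul] at hy; exact lt_irrefl _ hy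
  have hCpos : (P.map C) (Ioi y) ≠ 0 := by
    intro h; rw [h, mul_zero] at hy; exact lt_irrefl _ hy
  have hYIci : (P.map Y) (Ici y) ≠ 0 :=
    fun h => hYpos (le_antisymm (h ▸ measure_mono Ioi_subset_Ici_self) zero_le)
  -- the integrand as a measurable function
  set f : ℝ → ℝ≥0∞ := fun s => ((P.map Y) (Ici s) * (P.map C) (Ici s))⁻¹ with hf_def
  have hYanti : Antitone fun s => (P.map Y) (Ici s) := fun a b hab =>
    measure_mono (Ici_subset_Ici.2 hab)
  have hCanti : Antitone fun s => (P.map C) (Ici s) := fun a b hab =>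
    measure_mono (Ici_subset_Ici.2 hab)
  have hf : Measurable f := (hYanti.measurable.mul hCanti.measurable).inv
  -- key computation
  have key : ∫⁻ s in Iic y, (P {ω | s ≤ min (Y ω) (C ω)})⁻¹
      ∂(Measure.map (fun ω => min (Y ω) (C ω)) (P.restrict {ω | Y ω ≤ C ω}))
      = ENNReal.ofReal (- Real.log ((P.map Y) (Ici y)).toReal) := by
    have e1 : ∫⁻ s in Iic y, (P {ω | s ≤ min (Y ω) (C ω)})⁻¹
        ∂(Measure.map (fun ω => min (Y ω) (C ω)) (P.restrict {ω | Y ω ≤ C ω}))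
        = ∫⁻ s in Iic y, f s
        ∂(Measure.map (fun ω => min (Y ω) (C ω)) (P.restrict {ω | Y ω ≤ C ω})) := by
      refine lintegral_congr fun s => ?_
      rw [h1 s]
    rw [e1, km_nu1_lintegral P Y C hY hC hindep f hf y]
    have e2 : ∫⁻ s in Iic y, f s * (P.map C) (Ici s) ∂(P.map Y)
        = ∫⁻ s in Iic y, ((P.map Y) (Ici s))⁻¹ ∂(P.map Y) := by
      refine setLIntegral_congr_fun measurableSet_Iic (fun s hs => ?_)
      have hc0 : (P.map C) (Ici s) ≠ 0 := by
        intro h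
        apply hCpos
        have hmono : (P.map C) (Ioi y) ≤ (P.map C) (Ici s) :=
          measure_mono (fun x hx => mem_Ici.2 (le_trans (mem_Iic.1 hs) (le_of_lt (mem_Ioi.1 hx))))
        rw [h] at hmono
        exact le_antisymm hmono zero_le
      have hcT : (P.map C) (Ici s) ≠ ∞ := measure_ne_top _ _
      simp only [hf_def]
      rw [ENNReal.mul_inv (Or.inr hcT) (Or.inr hc0), mul_assoc,
        ENNReal.inv_mul_cancel hc0 hcT, mul_one]
    rw [e2, km_cumhazard (P.map Y) hatomY y hYIci]
  rw [key]
  set σ : ℝ := ((P.map Y) (Ici y)).toReal with hσdef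
  have hσ0 : 0 < σ := ENNReal.toReal_pos hYIci (measure_ne_top _ _)
  have hσ1 : σ ≤ 1 := by
    have := prob_le_one (μ := P.map Y) (s := Ici y)
    exact ENNReal.toReal_le_of_le_ofReal zero_le_one (by simpa using this)
  rw [ENNReal.toReal_ofReal (neg_nonneg.2 (Real.log_nonpos hσ0.le hσ1)), neg_neg,
    Real.exp_log hσ0, hσdef, ENNReal.ofReal_toReal (measure_ne_top _ _)]
  rw [km_Ici_eq_Ioi _ (hatomY y), Measure.map_apply hY measurableSet_Ioi]
  rfl
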